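/- Let E and F be real inner product spaces, let n ≥ 1, and let G : Fin n → E → F be a mean-square L-Lipschitz family with mean Ḡ. Fix K ≥ 0, a batch size b ≥ 1, points x : ℕ → E, and an initial estimate w ∈ F. For each sample sequence s : Fin K → (Fin b → Fin n), define v : ℕ → F by v 0 = w and, for k < K, v (k+1) = (1/b) ∑_{j : Fin b} (G (s k j) (x (k+1)) − G (s k j) (x k)) + v k. Then the average over all sample sequences s (i.e. (1/(n^b)^K) times the sum over all s) of ‖v K − Ḡ (x K)‖² is at most ‖w − Ḡ (x 0)‖² + (L²/b) ∑_{k=0}^{K−1} ‖x (k+1) − x k‖². (Lemma 3 of the paper — the telescoped SPIDER gradient-estimation error bound — specialized to Euclidean space with deterministic iterates, matching the conditional statement of Lemma 1.) -/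

import Mathlib

open Finset in
lemma core {F : Type*} [NormedAddCommGroup F] [InnerProductSpace ℝ F]
    (n : ℕ) (A : Fin n → F) (hA : ∑ i, A i = 0) (c : F) :
    ∀ b : ℕ, (n : ℝ) * ∑ t : Fin b → Fin n, ‖(∑ j : Fin b, A (t j)) + c‖ ^ 2
      = (n : ℝ) ^ (b + 1) * ‖c‖ ^ 2 + b * (n : ℝ) ^ b * ∑ i, ‖A i‖ ^ 2 := by
  intro b
  induction b with
  | zero => simp
  | succ b ih =>
    have hsum : ∑ t : Fin (b+1) → Fin n, ‖(∑ j : Fin (b+1), A (t j)) + c‖ ^ 2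
        = ∑ q : Fin n × (Fin b → Fin n),
            ‖(∑ j : Fin b, A (q.2 j)) + A q.1 + c‖ ^ 2 := by
      rw [← Fintype.sum_equiv (Fin.snocEquiv (fun _ => Fin n))
        (fun q => ‖(∑ j : Fin b, A (q.2 j)) + A q.1 + c‖ ^ 2)
        (fun t => ‖(∑ j : Fin (b+1), A (t j)) + c‖ ^ 2)]
      intro q
      congr 1
      rw [Fin.sum_univ_castSucc]
      simp [Fin.snocEquiv]
    have hinner : ∀ p : Fin b → Fin n,
        ∑ y : Fin n, ‖(∑ j : Fin b, A (p j)) + A y + c‖ ^ 2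
          = (n : ℝ) * ‖(∑ j : Fin b, A (p j)) + c‖ ^ 2 + ∑ i, ‖A i‖ ^ 2 := by
      intro p
      have : ∀ y : Fin n, ‖(∑ j : Fin b, A (p j)) + A y + c‖ ^ 2
          = ‖(∑ j : Fin b, A (p j)) + c‖ ^ 2
            + 2 * (inner ℝ ((∑ j : Fin b, A (p j)) + c) (A y) : ℝ) + ‖A y‖ ^ 2 := by
        intro y
        rw [add_right_comm, norm_add_sq_real]
      simp only [this]
      rw [Finset.sum_add_distrib, Finset.sum_add_distrib, ← Finset.mul_sum,
        ← inner_sum, hA, inner_zero_right]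
      simp [Finset.sum_const, mul_comm]
    have hcard : (Finset.univ : Finset (Fin b → Fin n)).card = n ^ b := by
      simp [Fintype.card_fun]
    rw [hsum, Fintype.sum_prod_type, Finset.sum_comm]
    simp only [hinner]
    rw [Finset.sum_add_distrib, Finset.sum_const, hcard, ← Finset.mul_sum]
    simp only [nsmul_eq_mul]
    push_cast
    linear_combination (n:ℝ) * ih

lemma step {F : Type*} [NormedAddCommGroup F] [InnerProductSpace ℝ F]
    (n b : ℕ) (hn : 1 ≤ n) (hb : 1 ≤ b) (D : Fin n → F) (e : F) :
    (1 / ((n : ℝ) ^ b)) * ∑ t : Fin b → Fin n,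
        ‖(1 / (b : ℝ)) • (∑ j : Fin b, D (t j)) - (1 / (n : ℝ)) • (∑ i, D i) + e‖ ^ 2
      ≤ ‖e‖ ^ 2 + (1 / (b : ℝ)) * ((1 / (n : ℝ)) * ∑ i, ‖D i‖ ^ 2) := by
  have hn' : (0:ℝ) < n := by exact_mod_cast hn
  have hb' : (0:ℝ) < b := by exact_mod_cast hb
  set Dbar : F := (1 / (n : ℝ)) • (∑ i, D i) with hDbar
  set A : Fin n → F := fun i => D i - Dbar with hAdef
  have hA : ∑ i, A i = 0 := by
    simp only [hAdef, Finset.sum_sub_distrib, Finset.sum_const, Finset.card_univ,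
      Fintype.card_fin, hDbar, sub_eq_zero]
    rw [← Nat.cast_smul_eq_nsmul ℝ, smul_smul, mul_one_div, div_self (ne_of_gt hn'), one_smul]
  -- rewrite each term
  have hterm : ∀ t : Fin b → Fin n,
      (1 / (b : ℝ)) • (∑ j : Fin b, D (t j)) - Dbar + e
        = (1 / (b : ℝ)) • ((∑ j : Fin b, A (t j)) + (b : ℝ) • e) := by
    intro t
    rw [smul_add, smul_smul, one_div_mul_cancel (ne_of_gt hb'), one_smul]
    congr 1
    simp only [hAdef]
    rw [Finset.sum_sub_distrib, smul_sub, Finset.sum_const, Finset.card_univ, Fintype.card_fin,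
      ← Nat.cast_smul_eq_nsmul ℝ, smul_smul, one_div_mul_cancel (ne_of_gt hb'), one_smul]
  have hnorm : ∀ t : Fin b → Fin n,
      ‖(1 / (b : ℝ)) • (∑ j : Fin b, D (t j)) - Dbar + e‖ ^ 2
        = (1 / (b : ℝ))^2 * ‖(∑ j : Fin b, A (t j)) + (b : ℝ) • e‖ ^ 2 := by
    intro t
    rw [hterm t, norm_smul, mul_pow]
    congr 1
    rw [Real.norm_eq_abs, sq_abs]
  simp only [hnorm]
  rw [← Finset.mul_sum]
  have hcore := core n A hA ((b : ℝ) • e) b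
  have hsum : ∑ t : Fin b → Fin n, ‖(∑ j : Fin b, A (t j)) + (b : ℝ) • e‖ ^ 2
      = ((n : ℝ) ^ (b + 1) * ‖(b : ℝ) • e‖ ^ 2 + b * (n : ℝ) ^ b * ∑ i, ‖A i‖ ^ 2) / n := by
    field_simp at hcore ⊢
    linarith [hcore]
  rw [hsum]
  have hbe : ‖(b : ℝ) • e‖ ^ 2 = (b:ℝ)^2 * ‖e‖^2 := by
    rw [norm_smul, mul_pow, Real.norm_eq_abs, sq_abs]
  have hV : ∑ i, ‖A i‖ ^ 2 ≤ ∑ i, ‖D i‖ ^ 2 := by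
    have expand : ∀ i, ‖A i‖ ^ 2 = ‖D i‖^2 - 2 * (inner ℝ (D i) Dbar : ℝ) + ‖Dbar‖^2 := by
      intro i; rw [hAdef]; exact norm_sub_sq_real _ _
    simp only [expand]
    rw [Finset.sum_add_distrib, Finset.sum_sub_distrib, Finset.sum_const, Finset.card_univ,
      Fintype.card_fin, ← Finset.mul_sum, ← sum_inner]
    have : (inner ℝ (∑ i, D i) Dbar : ℝ) = (n : ℝ) * ‖Dbar‖^2 := by
      have : (∑ i, D i) = (n:ℝ) • Dbar := by
        rw [hDbar, smul_smul, mul_one_div, div_self (ne_of_gt hn'), one_smul]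
      rw [this, real_inner_smul_left, real_inner_self_eq_norm_sq]
    rw [this]
    have h1 : (0:ℝ) ≤ (n:ℝ) * ‖Dbar‖^2 := by positivity
    simp only [nsmul_eq_mul]
    nlinarith
  rw [hbe]
  have key : (1 / (n : ℝ) ^ b) * ((1 / (b : ℝ))^2 *
      (((n : ℝ) ^ (b + 1) * ((b:ℝ)^2 * ‖e‖^2) + b * (n : ℝ) ^ b * ∑ i, ‖A i‖ ^ 2) / n))
      = ‖e‖^2 + (1/(b:ℝ)) * ((1/(n:ℝ)) * ∑ i, ‖A i‖ ^ 2) := by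
    field_simp
    ring
  rw [key]
  have : (0:ℝ) < 1/(b:ℝ) * (1/(n:ℝ)) := by positivity
  nlinarith [hV, this]

lemma aux {E F : Type*} [NormedAddCommGroup E] [InnerProductSpace ℝ E]
    [NormedAddCommGroup F] [InnerProductSpace ℝ F]
    (n : ℕ) (hn : 1 ≤ n) (L : ℝ) (G : Fin n → E → F)
    (hlip : ∀ x y : E,
      (1 / (n : ℝ)) * ∑ i : Fin n, ‖G i x - G i y‖ ^ 2 ≤ L ^ 2 * ‖x - y‖ ^ 2)
    (b : ℕ) (hb : 1 ≤ b) (x : ℕ → E) (w : F) :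
    ∀ K (v : (Fin K → Fin b → Fin n) → ℕ → F), (∀ s, v s 0 = w) →
    (∀ s, ∀ k, ∀ hk : k < K,
      v s (k + 1) =
        ((1 / (b : ℝ)) • ∑ j : Fin b,
            (G (s ⟨k, hk⟩ j) (x (k + 1)) - G (s ⟨k, hk⟩ j) (x k))) + v s k) →
    (1 / ((n : ℝ) ^ b) ^ K) *
        ∑ s : Fin K → Fin b → Fin n,
          ‖v s K - (1 / (n : ℝ)) • ∑ i : Fin n, G i (x K)‖ ^ 2
      ≤ ‖w - (1 / (n : ℝ)) • ∑ i : Fin n, G i (x 0)‖ ^ 2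
          + (L ^ 2 / (b : ℝ)) * ∑ k ∈ Finset.range K, ‖x (k + 1) - x k‖ ^ 2 := by
  have hb' : (0:ℝ) < b := by exact_mod_cast hb
  have hn' : (0:ℝ) < n := by exact_mod_cast hn
  intro K
  induction K with
  | zero =>
    intro v hv0 _
    simp only [Finset.range_zero, Finset.sum_empty, mul_zero, add_zero, pow_zero]
    have : ∀ s : Fin 0 → Fin b → Fin n,
        ‖v s 0 - (1 / (n : ℝ)) • ∑ i : Fin n, G i (x 0)‖ ^ 2
          = ‖w - (1 / (n : ℝ)) • ∑ i : Fin n, G i (x 0)‖ ^ 2 := fun s => by rw [hv0]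
    rw [Finset.sum_congr rfl (fun s _ => this s), Finset.sum_const]
    simp [Fintype.card_fun]
  | succ K ih =>
    intro v hv0 hvrec
    have t0 : Fin b → Fin n := fun _ => ⟨0, hn⟩
    -- v at time k ≤ K does not depend on the last batch
    have hdep : ∀ k, k ≤ K → ∀ (p : Fin K → Fin b → Fin n) (t t' : Fin b → Fin n),
        v (Fin.snoc p t) k = v (Fin.snoc p t') k := by
      intro k
      induction k with
      | zero => intro _ p t t'; rw [hv0, hv0]
      | succ k ihk =>
        intro hk p t t'
        have hkK : k < K := hk
        have hk1 : k < K + 1 := by omega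
        rw [hvrec _ k hk1, hvrec _ k hk1]
        have hcast : (⟨k, hk1⟩ : Fin (K+1)) = Fin.castSucc ⟨k, hkK⟩ := rfl
        rw [hcast, Fin.snoc_castSucc, Fin.snoc_castSucc, ihk (le_of_lt hkK) p t t']
    set v' : (Fin K → Fin b → Fin n) → ℕ → F := fun p => v (Fin.snoc p t0) with hv'
    have hv0' : ∀ p, v' p 0 = w := fun p => hv0 _
    have hvrec' : ∀ p, ∀ k, ∀ hk : k < K,
        v' p (k + 1) =
          ((1 / (b : ℝ)) • ∑ j : Fin b,
              (G (p ⟨k, hk⟩ j) (x (k + 1)) - G (p ⟨k, hk⟩ j) (x k))) + v' p k := by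
      intro p k hk
      have hk1 : k < K + 1 := by omega
      show v (Fin.snoc p t0) (k+1) = _
      rw [hvrec _ k hk1]
      have hcast : (⟨k, hk1⟩ : Fin (K+1)) = Fin.castSucc ⟨k, hk⟩ := rfl
      rw [hcast, Fin.snoc_castSucc]
    have IH := ih v' hv0' hvrec'
    set D : Fin n → F := fun i => G i (x (K+1)) - G i (x K) with hD
    set e : (Fin K → Fin b → Fin n) → F :=
      fun p => v' p K - (1 / (n : ℝ)) • ∑ i : Fin n, G i (x K) with he
    have hval : ∀ (p : Fin K → Fin b → Fin n) (t : Fin b → Fin n),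
        v (Fin.snoc p t) (K+1) - (1 / (n : ℝ)) • ∑ i : Fin n, G i (x (K+1))
          = (1 / (b : ℝ)) • (∑ j : Fin b, D (t j)) - (1 / (n : ℝ)) • (∑ i, D i) + e p := by
      intro p t
      have hK1 : K < K + 1 := lt_add_one K
      rw [hvrec _ K hK1]
      have hlast : (⟨K, hK1⟩ : Fin (K+1)) = Fin.last K := rfl
      rw [hlast, Fin.snoc_last]
      have hvk : v (Fin.snoc p t) K = v' p K := hdep K le_rfl p t t0
      rw [hvk]
      simp only [he, hD, Finset.sum_sub_distrib, smul_sub]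
      abel
    have hsplit : ∑ s : Fin (K+1) → Fin b → Fin n,
        ‖v s (K+1) - (1 / (n : ℝ)) • ∑ i : Fin n, G i (x (K+1))‖ ^ 2
        = ∑ p : Fin K → Fin b → Fin n, ∑ t : Fin b → Fin n,
            ‖(1 / (b : ℝ)) • (∑ j : Fin b, D (t j)) - (1 / (n : ℝ)) • (∑ i, D i) + e p‖ ^ 2 := by
      rw [← Fintype.sum_equiv (Fin.snocEquiv (fun _ => (Fin b → Fin n)))
        (fun q => ‖v (Fin.snoc q.2 q.1) (K+1)
            - (1 / (n : ℝ)) • ∑ i : Fin n, G i (x (K+1))‖ ^ 2)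
        (fun s => ‖v s (K+1) - (1 / (n : ℝ)) • ∑ i : Fin n, G i (x (K+1))‖ ^ 2)
        (fun q => rfl)]
      rw [Fintype.sum_prod_type, Finset.sum_comm]
      exact Finset.sum_congr rfl fun p _ => Finset.sum_congr rfl fun t _ => by rw [hval p t]
    have hstep : ∀ p : Fin K → Fin b → Fin n,
        (1 / ((n : ℝ) ^ b)) * ∑ t : Fin b → Fin n,
            ‖(1 / (b : ℝ)) • (∑ j : Fin b, D (t j)) - (1 / (n : ℝ)) • (∑ i, D i) + e p‖ ^ 2
          ≤ ‖e p‖ ^ 2 + (L ^ 2 / (b : ℝ)) * ‖x (K+1) - x K‖ ^ 2 := by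
      intro p
      refine le_trans (step n b hn hb D (e p)) ?_
      have h1 : (1 / (n : ℝ)) * ∑ i, ‖D i‖ ^ 2 ≤ L ^ 2 * ‖x (K+1) - x K‖ ^ 2 := hlip _ _
      have h2 : (0:ℝ) ≤ 1 / (b:ℝ) := by positivity
      have h3 := mul_le_mul_of_nonneg_left h1 h2
      have h4 : (1 / (b:ℝ)) * (L ^ 2 * ‖x (K+1) - x K‖ ^ 2)
          = (L ^ 2 / (b : ℝ)) * ‖x (K+1) - x K‖ ^ 2 := by ring
      linarith
    have hpos : (0:ℝ) < ((n : ℝ) ^ b) ^ K := by positivity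
    have hcard : (Finset.univ : Finset (Fin K → Fin b → Fin n)).card = (n ^ b) ^ K := by
      simp [Fintype.card_fun]
    calc (1 / ((n : ℝ) ^ b) ^ (K+1)) *
          ∑ s : Fin (K+1) → Fin b → Fin n,
            ‖v s (K+1) - (1 / (n : ℝ)) • ∑ i : Fin n, G i (x (K+1))‖ ^ 2
        = (1 / ((n : ℝ) ^ b) ^ K) * ∑ p : Fin K → Fin b → Fin n,
            ((1 / ((n : ℝ) ^ b)) * ∑ t : Fin b → Fin n,
              ‖(1 / (b : ℝ)) • (∑ j : Fin b, D (t j))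
                - (1 / (n : ℝ)) • (∑ i, D i) + e p‖ ^ 2) := by
          rw [hsplit, Finset.mul_sum, Finset.mul_sum]
          refine Finset.sum_congr rfl fun p _ => ?_
          rw [pow_succ]
          ring
      _ ≤ (1 / ((n : ℝ) ^ b) ^ K) * ∑ p : Fin K → Fin b → Fin n,
            (‖e p‖ ^ 2 + (L ^ 2 / (b : ℝ)) * ‖x (K+1) - x K‖ ^ 2) := by
          apply mul_le_mul_of_nonneg_left _ (by positivity)
          exact Finset.sum_le_sum fun p _ => hstep p
      _ = (1 / ((n : ℝ) ^ b) ^ K) * ∑ p : Fin K → Fin b → Fin n, ‖e p‖ ^ 2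
            + (L ^ 2 / (b : ℝ)) * ‖x (K+1) - x K‖ ^ 2 := by
          rw [Finset.sum_add_distrib, Finset.sum_const, hcard, mul_add]
          congr 1
          rw [nsmul_eq_mul]
          push_cast
          rw [← mul_assoc, one_div, inv_mul_cancel₀ (by positivity), one_mul]
      _ ≤ (‖w - (1 / (n : ℝ)) • ∑ i : Fin n, G i (x 0)‖ ^ 2
            + (L ^ 2 / (b : ℝ)) * ∑ k ∈ Finset.range K, ‖x (k + 1) - x k‖ ^ 2)
            + (L ^ 2 / (b : ℝ)) * ‖x (K+1) - x K‖ ^ 2 := add_le_add_left IH _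
      _ = ‖w - (1 / (n : ℝ)) • ∑ i : Fin n, G i (x 0)‖ ^ 2
            + (L ^ 2 / (b : ℝ)) * ∑ k ∈ Finset.range (K+1), ‖x (k + 1) - x k‖ ^ 2 := by
          rw [Finset.sum_range_succ]
          ring


/-- Telescoped SPIDER gradient-estimation error bound (Lemma 3), in Euclidean
space with deterministic iterates: the average over all sample sequences
`s : Fin K → (Fin b → Fin n)` of `‖v s K − Ḡ (x K)‖²` is at most
`‖w − Ḡ (x 0)‖² + (L²/b) ∑_{k<K} ‖x (k+1) − x k‖²`. -/
theorem stmt_3 {E F : Type*} [NormedAddCommGroup E] [InnerProductSpace ℝ E]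
    [NormedAddCommGroup F] [InnerProductSpace ℝ F]
    (n : ℕ) (hn : 1 ≤ n) (L : ℝ) (hL : 0 ≤ L) (G : Fin n → E → F)
    (hlip : ∀ x y : E,
      (1 / (n : ℝ)) * ∑ i : Fin n, ‖G i x - G i y‖ ^ 2 ≤ L ^ 2 * ‖x - y‖ ^ 2)
    (K : ℕ) (b : ℕ) (hb : 1 ≤ b) (x : ℕ → E) (w : F)
    (v : (Fin K → Fin b → Fin n) → ℕ → F)
    (hv0 : ∀ s, v s 0 = w)
    (hvrec : ∀ s, ∀ k, ∀ hk : k < K,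
      v s (k + 1) =
        ((1 / (b : ℝ)) • ∑ j : Fin b,
            (G (s ⟨k, hk⟩ j) (x (k + 1)) - G (s ⟨k, hk⟩ j) (x k))) + v s k) :
    (1 / ((n : ℝ) ^ b) ^ K) *
        ∑ s : Fin K → Fin b → Fin n,
          ‖v s K - (1 / (n : ℝ)) • ∑ i : Fin n, G i (x K)‖ ^ 2
      ≤ ‖w - (1 / (n : ℝ)) • ∑ i : Fin n, G i (x 0)‖ ^ 2
          + (L ^ 2 / (b : ℝ)) * ∑ k ∈ Finset.range K, ‖x (k + 1) - x k‖ ^ 2 := by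
  exact aux n hn L G hlip b hb x w K v hv0 hvrec
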